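/- If x* is a feasible point of a constrained minimization problem min f(x) s.t. g(x)=0, h(x)≥0 satisfying the KKT conditions with multipliers (λ*, μ*), and the Hessian of the Lagrangian ∇²ₓₓL(x*,λ*,μ*) is positive definite on the critical cone at (x*,λ*,μ*) (i.e., vᵀ∇²ₓₓL v > 0 for all nonzero v in the critical cone), then x* is a strict local minimizer. -/

import Mathlib

open Set Filter Topology Asymptotics

section Aux
variable {E : Type*} [NormedAddCommGroup E] [NormedSpace ℝ E]

lemma taylor2_line (φ φ' φ'' : ℝ → ℝ) (hφ : ContDiff ℝ 2 φ)
    (hd1 : ∀ t, HasDerivAt φ (φ' t) t) (hd2 : ∀ t, HasDerivAt φ' (φ'' t) t) :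
    ∃ c ∈ Ioo (0:ℝ) 1, φ 1 = φ 0 + φ' 0 + φ'' c / 2 := by
  have h01 : (0:ℝ) < 1 := one_pos
  have hu : UniqueDiffOn ℝ (Icc (0:ℝ) 1) := uniqueDiffOn_Icc h01
  have hiter1 : ∀ t ∈ Icc (0:ℝ) 1, iteratedDerivWithin 1 φ (Icc 0 1) t = φ' t := by
    intro t ht
    rw [iteratedDerivWithin_one]
    exact (hd1 t).hasDerivWithinAt.derivWithin (hu t ht)
  have hf : ContDiffOn ℝ 1 φ (Icc 0 1) := (hφ.of_le one_le_two).contDiffOn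
  have hf' : DifferentiableOn ℝ (iteratedDerivWithin 1 φ (Icc 0 1)) (Ioo 0 1) := by
    apply DifferentiableOn.congr (f := φ')
    · exact fun t _ => (hd2 t).differentiableAt.differentiableWithinAt
    · exact fun t ht => hiter1 t (Ioo_subset_Icc_self ht)
  obtain ⟨c, hc, heq⟩ := taylor_mean_remainder_lagrange (n := 1) h01.ne (by rwa [uIcc_of_le h01.le])
    (by rwa [uIcc_of_le h01.le, uIoo_of_le h01.le])
  rw [uIcc_of_le h01.le] at heq
  rw [uIoo_of_le h01.le] at hc
  refine ⟨c, hc, ?_⟩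
  have hiter2 : iteratedDerivWithin 2 φ (Icc 0 1) c = φ'' c := by
    rw [show (2:ℕ) = 1+1 from rfl, iteratedDerivWithin_succ]
    rw [derivWithin_congr hiter1 (hiter1 c (Ioo_subset_Icc_self hc))]
    exact (hd2 c).hasDerivWithinAt.derivWithin (hu c (Ioo_subset_Icc_self hc))
  have htaylor : taylorWithinEval φ 1 (Icc 0 1) 0 1 = φ 0 + φ' 0 := by
    rw [taylor_within_apply]
    simp [Finset.sum_range_succ, hiter1 0 (left_mem_Icc.mpr h01.le),
      iteratedDerivWithin_zero]
  rw [htaylor, hiter2] at heq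
  norm_num [Nat.factorial] at heq
  linarith [heq]

lemma taylor2_segment (L : E → ℝ) (hL : ContDiff ℝ 2 L) (a u : E) :
    ∃ c ∈ Ioo (0:ℝ) 1, L (a + u) = L a + fderiv ℝ L a u
      + (fderiv ℝ (fderiv ℝ L) (a + c • u) u) u / 2 := by
  set ℓ : ℝ → E := fun t => a + t • u with hℓdef
  have hℓ : ∀ t : ℝ, HasDerivAt ℓ u t := by
    intro t
    simpa [hℓdef] using ((hasDerivAt_id t).smul_const u).const_add a
  have hLdiff : Differentiable ℝ L := hL.differentiable two_ne_zero
  have hF : Differentiable ℝ (fderiv ℝ L) :=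
    (hL.fderiv_right (m := 1) le_rfl).differentiable one_ne_zero
  have hφ : ContDiff ℝ 2 (L ∘ ℓ) :=
    hL.comp (contDiff_const.add (contDiff_id.smul contDiff_const))
  have hd1 : ∀ t, HasDerivAt (L ∘ ℓ) (fderiv ℝ L (ℓ t) u) t := fun t =>
    (hLdiff (ℓ t)).hasFDerivAt.comp_hasDerivAt t (hℓ t)
  have hd2 : ∀ t, HasDerivAt (fun t => fderiv ℝ L (ℓ t) u)
      ((fderiv ℝ (fderiv ℝ L) (ℓ t) u) u) t := by
    intro t
    have h1 : HasDerivAt (fun t => fderiv ℝ L (ℓ t))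
        (fderiv ℝ (fderiv ℝ L) (ℓ t) u) t :=
      (hF (ℓ t)).hasFDerivAt.comp_hasDerivAt t (hℓ t)
    simpa using h1.clm_apply (hasDerivAt_const t u)
  obtain ⟨c, hc, heq⟩ := taylor2_line (L ∘ ℓ) _ _ hφ hd1 hd2
  refine ⟨c, hc, ?_⟩
  simpa [hℓdef, Function.comp] using heq

lemma seq_deriv_limit (φ : E → ℝ) {xs : E} (hφ : DifferentiableAt ℝ φ xs)
    (s : ℕ → ℝ) (w : ℕ → E) (hs0 : ∀ k, s k ≠ 0)
    (hst : Filter.Tendsto s atTop (nhds 0)) {v : E}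
    (hw : Filter.Tendsto w atTop (nhds v)) :
    Filter.Tendsto (fun k => (φ (xs + s k • w k) - φ xs) / s k) atTop
      (nhds (fderiv ℝ φ xs v)) := by
  set D := fderiv ℝ φ xs with hD
  set y : ℕ → E := fun k => xs + s k • w k with hy
  have hytend : Filter.Tendsto y atTop (nhds xs) := by
    have : Filter.Tendsto (fun k => s k • w k) atTop (nhds ((0:ℝ) • v)) :=
      hst.smul hw
    simpa using tendsto_const_nhds.add this
  have hlo : (fun k => φ (y k) - φ xs - D (y k - xs)) =o[atTop] (fun k => y k - xs) :=
    (hφ.hasFDerivAt.isLittleO).comp_tendsto hytend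
  have hbig : (fun k => y k - xs) =O[atTop] (fun k => s k) := by
    rw [Asymptotics.isBigO_iff]
    refine ⟨‖v‖ + 1, ?_⟩
    have hev : ∀ᶠ k in atTop, ‖w k‖ ≤ ‖v‖ + 1 :=
      hw.norm.eventually_le_const (lt_add_one ‖v‖)
    filter_upwards [hev] with k hk
    have : y k - xs = s k • w k := by simp [hy]
    rw [this, norm_smul]
    calc ‖s k‖ * ‖w k‖ ≤ ‖s k‖ * (‖v‖ + 1) := by
          exact mul_le_mul_of_nonneg_left hk (norm_nonneg _)
      _ = (‖v‖ + 1) * ‖s k‖ := mul_comm _ _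
  have hdiv : Filter.Tendsto (fun k => (φ (y k) - φ xs - D (y k - xs)) / s k) atTop
      (nhds 0) := (hlo.trans_isBigO hbig).tendsto_div_nhds_zero
  have hDk : Filter.Tendsto (fun k => D (w k)) atTop (nhds (D v)) :=
    (D.continuous.tendsto v).comp hw
  have hEq : ∀ k, (φ (y k) - φ xs) / s k
      = (φ (y k) - φ xs - D (y k - xs)) / s k + D (w k) := by
    intro k
    have h1 : D (y k - xs) = s k * D (w k) := by
      have : y k - xs = s k • w k := by simp [hy]
      rw [this, map_smul, smul_eq_mul]
    rw [h1]
    field_simp [hs0 k]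
    ring
  have := hdiv.add hDk
  simp only [zero_add] at this
  exact Filter.Tendsto.congr (fun k => (hEq k).symm) this

end Aux

set_option maxHeartbeats 1000000 in
/-- Second-order sufficient conditions: a KKT point at which the Hessian of the
Lagrangian is positive definite on the critical cone is a strict local minimizer. -/
theorem second_order_sufficient_conditions {n n2 n3 : ℕ}
    (f : (Fin n → ℝ) → ℝ) (g : (Fin n → ℝ) → Fin n2 → ℝ) (h : (Fin n → ℝ) → Fin n3 → ℝ)
    (hf : ContDiff ℝ 2 f) (hg : ContDiff ℝ 2 g) (hh : ContDiff ℝ 2 h)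
    (xs : Fin n → ℝ) (lam : Fin n2 → ℝ) (mu : Fin n3 → ℝ)
    (L : (Fin n → ℝ) → ℝ)
    (hL : L = fun x => f x - ∑ i, lam i * g x i - ∑ i, mu i * h x i)
    -- KKT conditions at x* with multipliers (λ*, μ*)
    (hfeas_g : g xs = 0) (hfeas_h : ∀ i, 0 ≤ h xs i)
    (hmu : ∀ i, 0 ≤ mu i) (hcompl : ∀ i, mu i * h xs i = 0)
    (hstat : fderiv ℝ L xs = 0)
    -- positive definiteness of the Hessian of the Lagrangian on the critical cone
    (hsosc : ∀ v : Fin n → ℝ, v ≠ 0 →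
      (∀ i, fderiv ℝ (fun x => g x i) xs v = 0) →
      (∀ i, h xs i = 0 → 0 < mu i → fderiv ℝ (fun x => h x i) xs v = 0) →
      (∀ i, h xs i = 0 → mu i = 0 → 0 ≤ fderiv ℝ (fun x => h x i) xs v) →
      0 < fderiv ℝ (fun y => fderiv ℝ L y v) xs v) :
    -- x* is a strict local minimizer over the feasible set
    ∃ ε > 0, ∀ x : Fin n → ℝ, x ≠ xs → ‖x - xs‖ < ε →
      g x = 0 → (∀ i, 0 ≤ h x i) → f xs < f x := by
  classical
  have hgi : ∀ i, ContDiff ℝ 2 (fun x => g x i) := fun i => (contDiff_pi.mp hg) i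
  have hhi : ∀ i, ContDiff ℝ 2 (fun x => h x i) := fun i => (contDiff_pi.mp hh) i
  have hLC : ContDiff ℝ 2 L := by
    rw [hL]
    exact (hf.sub (ContDiff.sum fun i _ => contDiff_const.mul (hgi i))).sub
      (ContDiff.sum fun i _ => contDiff_const.mul (hhi i))
  have hgxs : ∀ i, g xs i = 0 := fun i => congrFun hfeas_g i
  have hLval : ∀ x, g x = 0 → L x = f x - ∑ j, mu j * h x j := by
    intro x hx
    have : ∀ i, g x i = 0 := fun i => congrFun hx i
    simp [hL, this]
  have hLxs : L xs = f xs := by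
    rw [hLval xs hfeas_g, Finset.sum_eq_zero (fun i _ => hcompl i), sub_zero]
  by_contra hcon
  push_neg at hcon
  have hseq : ∀ k : ℕ, ∃ x : Fin n → ℝ, x ≠ xs ∧ ‖x - xs‖ < 1/(k+1) ∧ g x = 0 ∧
      (∀ i, 0 ≤ h x i) ∧ f x ≤ f xs := by
    intro k
    obtain ⟨x, hx⟩ := hcon (1/(k+1)) (by positivity)
    exact ⟨x, hx⟩
  choose X hXne hXnorm hXg hXh hXf using hseq
  set t : ℕ → ℝ := fun k => ‖X k - xs‖ with ht
  have ht0 : ∀ k, 0 < t k := fun k => norm_pos_iff.mpr (sub_ne_zero.mpr (hXne k))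
  have httend : Filter.Tendsto t atTop (nhds 0) := by
    apply squeeze_zero (fun k => (ht0 k).le) (fun k => (hXnorm k).le)
    exact tendsto_one_div_add_atTop_nhds_zero_nat
  set V : ℕ → (Fin n → ℝ) := fun k => (t k)⁻¹ • (X k - xs) with hV
  have hVmem : ∀ k, V k ∈ Metric.sphere (0:Fin n → ℝ) 1 := by
    intro k
    rw [mem_sphere_zero_iff_norm, hV]
    rw [norm_smul, norm_inv, norm_norm]
    exact inv_mul_cancel₀ (ht0 k).ne'
  obtain ⟨v, hvmem, σ, hσ, hwt⟩ :=
    (isCompact_sphere (0:Fin n → ℝ) 1).tendsto_subseq hVmem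
  set s' : ℕ → ℝ := fun k => t (σ k) with hs'
  set w : ℕ → (Fin n → ℝ) := fun k => V (σ k) with hwdef
  have hs'pos : ∀ k, 0 < s' k := fun k => ht0 (σ k)
  have hs'0 : ∀ k, s' k ≠ 0 := fun k => (hs'pos k).ne'
  have hs't : Filter.Tendsto s' atTop (nhds 0) := httend.comp hσ.tendsto_atTop
  have hw : Filter.Tendsto w atTop (nhds v) := hwt
  have hYk : ∀ k, xs + s' k • w k = X (σ k) := by
    intro k
    simp only [hs', hwdef, hV, smul_smul, mul_inv_cancel₀ (ht0 (σ k)).ne', one_smul]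
    abel
  have hv1 : ‖v‖ = 1 := mem_sphere_zero_iff_norm.mp hvmem
  have hvne : v ≠ 0 := by
    intro hv0
    rw [hv0, norm_zero] at hv1
    exact one_ne_zero hv1.symm
  have hw1 : ∀ k, ‖w k‖ = 1 := fun k => mem_sphere_zero_iff_norm.mp (hVmem (σ k))
  -- limit of difference quotients along the sequence, as a reusable fact
  have hquot : ∀ (φ : (Fin n → ℝ) → ℝ), DifferentiableAt ℝ φ xs →
      Filter.Tendsto (fun k => (φ (X (σ k)) - φ xs) / s' k) atTop
        (nhds (fderiv ℝ φ xs v)) := by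
    intro φ hφ
    have := seq_deriv_limit φ hφ s' w hs'0 hs't hw
    refine this.congr (fun k => ?_)
    rw [hYk k]
  -- critical cone conditions
  have cone1 : ∀ i, fderiv ℝ (fun x => g x i) xs v = 0 := by
    intro i
    have hlim := hquot (fun x => g x i) ((hgi i).differentiable two_ne_zero).differentiableAt
    have hz : Filter.Tendsto (fun _ : ℕ => (0:ℝ)) atTop
        (nhds (fderiv ℝ (fun x => g x i) xs v)) := by
      refine hlim.congr (fun k => ?_)
      beta_reduce
      rw [show g (X (σ k)) i = 0 from congrFun (hXg (σ k)) i, hgxs i]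
      simp
    exact (tendsto_nhds_unique hz tendsto_const_nhds)
  have cone3 : ∀ i, h xs i = 0 → mu i = 0 → 0 ≤ fderiv ℝ (fun x => h x i) xs v := by
    intro i hact _
    have hlim := hquot (fun x => h x i) ((hhi i).differentiable two_ne_zero).differentiableAt
    refine ge_of_tendsto' hlim (fun k => ?_)
    beta_reduce
    rw [hact, sub_zero]
    exact div_nonneg (hXh (σ k) i) (hs'pos k).le
  have hL0 : fderiv ℝ L xs v = 0 := by rw [hstat]; rfl
  have hLlim : Filter.Tendsto (fun k => (L (X (σ k)) - L xs) / s' k) atTop (nhds 0) := by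
    have := hquot L (hLC.differentiable two_ne_zero).differentiableAt
    rwa [hL0] at this
  have hsumid : ∀ k, ∑ j, mu j * h (X (σ k)) j = f (X (σ k)) - L (X (σ k)) := by
    intro k
    rw [hLval _ (hXg (σ k))]
    ring
  have cone2 : ∀ i, h xs i = 0 → 0 < mu i → fderiv ℝ (fun x => h x i) xs v = 0 := by
    intro i hact hmui
    have hlim := hquot (fun x => h x i) ((hhi i).differentiable two_ne_zero).differentiableAt
    have hlim2 : Filter.Tendsto (fun k => mu i * (h (X (σ k)) i / s' k)) atTop
        (nhds (mu i * fderiv ℝ (fun x => h x i) xs v)) := by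
      refine (hlim.const_mul (mu i)).congr (fun k => ?_)
      beta_reduce
      rw [hact, sub_zero]
    have hub : ∀ k, mu i * (h (X (σ k)) i / s' k) ≤ -((L (X (σ k)) - L xs) / s' k) := by
      intro k
      have h1 : mu i * h (X (σ k)) i ≤ ∑ j, mu j * h (X (σ k)) j :=
        Finset.single_le_sum (f := fun j => mu j * h (X (σ k)) j)
          (fun j _ => mul_nonneg (hmu j) (hXh (σ k) j)) (Finset.mem_univ i)
      have h2 : ∑ j, mu j * h (X (σ k)) j ≤ -(L (X (σ k)) - L xs) := by
        rw [hsumid k, hLxs]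
        linarith [hXf (σ k)]
      rw [mul_div_assoc', ← neg_div]
      exact (div_le_div_iff_of_pos_right (hs'pos k)).mpr (le_trans h1 h2)
    have hlb : ∀ k, 0 ≤ mu i * (h (X (σ k)) i / s' k) := fun k =>
      mul_nonneg (hmu i) (div_nonneg (hXh (σ k) i) (hs'pos k).le)
    have hzero : Filter.Tendsto (fun k => mu i * (h (X (σ k)) i / s' k)) atTop (nhds 0) := by
      apply squeeze_zero hlb hub
      simpa using hLlim.neg
    have hmd : mu i * fderiv ℝ (fun x => h x i) xs v = 0 := tendsto_nhds_unique hlim2 hzero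
    exact (mul_eq_zero.mp hmd).resolve_left hmui.ne'
  -- apply the second-order condition
  have hQpos := hsosc v hvne cone1 cone2 cone3
  have hFdiff : Differentiable ℝ (fderiv ℝ L) := (hLC.fderiv_right (m := 1) le_rfl).differentiable one_ne_zero
  have hQeq : fderiv ℝ (fun y => fderiv ℝ L y v) xs v = (fderiv ℝ (fderiv ℝ L) xs v) v := by
    rw [fderiv_clm_apply (hFdiff xs) (differentiableAt_const v)]
    simp
  -- Taylor expansion along the segments
  have htay : ∀ k, ∃ c ∈ Ioo (0:ℝ) 1, L (X (σ k)) = L xs + fderiv ℝ L xs (s' k • w k) +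
      (fderiv ℝ (fderiv ℝ L) (xs + c • (s' k • w k)) (s' k • w k)) (s' k • w k) / 2 := by
    intro k
    have := taylor2_segment L hLC xs (s' k • w k)
    rwa [hYk k] at this
  choose c hcIoo hceq using htay
  set B := fderiv ℝ (fderiv ℝ L) with hB
  set ξ : ℕ → (Fin n → ℝ) := fun k => xs + c k • (s' k • w k) with hξdef
  have hξt : Filter.Tendsto ξ atTop (nhds xs) := by
    have h0 : Filter.Tendsto (fun k => c k • (s' k • w k)) atTop (nhds 0) := by
      apply squeeze_zero_norm (fun k => ?_) hs't
      rw [norm_smul, norm_smul, hw1 k, mul_one, Real.norm_eq_abs, Real.norm_eq_abs,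
        abs_of_pos (hcIoo k).1, abs_of_pos (hs'pos k)]
      nlinarith [(hcIoo k).2, hs'pos k]
    simpa using h0.const_add xs
  have hBval : ∀ k, (B (ξ k) (w k)) (w k) = 2 * ((L (X (σ k)) - L xs) / (s' k)^2) := by
    intro k
    have heq := hceq k
    rw [hstat] at heq
    simp only [ContinuousLinearMap.zero_apply, add_zero] at heq
    have hsm : (B (ξ k) (s' k • w k)) (s' k • w k) = (s' k)^2 * (B (ξ k) (w k)) (w k) := by
      simp only [map_smul, ContinuousLinearMap.smul_apply, smul_eq_mul]
      ring
    rw [hsm] at heq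
    have hs2 : (s' k)^2 ≠ 0 := pow_ne_zero 2 (hs'0 k)
    field_simp
    rw [eq_div_iff hs2, heq]
    ring
  have hnonpos : ∀ k, (B (ξ k) (w k)) (w k) ≤ 0 := by
    intro k
    rw [hBval k]
    have hLle : L (X (σ k)) ≤ L xs := by
      rw [hLval _ (hXg (σ k)), hLxs]
      have : 0 ≤ ∑ j, mu j * h (X (σ k)) j :=
        Finset.sum_nonneg (fun j _ => mul_nonneg (hmu j) (hXh (σ k) j))
      linarith [hXf (σ k)]
    have : (L (X (σ k)) - L xs) / (s' k)^2 ≤ 0 :=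
      div_nonpos_of_nonpos_of_nonneg (by linarith) (sq_nonneg _)
    linarith
  have hBcont : Continuous B := (hLC.fderiv_right (m := 1) le_rfl).continuous_fderiv one_ne_zero
  have hcont : Continuous (fun p : (Fin n → ℝ) × (Fin n → ℝ) => (B p.1 p.2) p.2) :=
    ((hBcont.comp continuous_fst).clm_apply continuous_snd).clm_apply continuous_snd
  have hBlim : Filter.Tendsto (fun k => (B (ξ k) (w k)) (w k)) atTop (nhds ((B xs v) v)) :=
    (hcont.tendsto (xs, v)).comp (hξt.prodMk_nhds hw)
  have hfinal : (B xs v) v ≤ 0 := le_of_tendsto hBlim (Filter.Eventually.of_forall hnonpos)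
  rw [hQeq] at hQpos
  rw [hB] at hfinal
  linarith
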